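/- Let E₀, E₁, F₀, F₁ be Banach spaces, T : E₀ + E₁ → F₀ + F₁ linear with T bounded from E₀ to F₀ and compact from E₁ to F₁. Define Y_i := T(E_i) with norm ‖y‖_{Y_i} = inf{‖x‖_{E_i} : Tx = y}. Then Y₀, Y₁ are Banach spaces, the map S : E_i → Y_i, Sx = Tx, is bounded for i = 0,1, the inclusion J : Y₁ → F₁ is compact, and T = J ∘ S. -/

import Mathlib

open Filter Topology

theorem factor_aux {E F : Type} [NormedAddCommGroup E] [NormedSpace ℝ E] [CompleteSpace E]
    [NormedAddCommGroup F] [NormedSpace ℝ F] (T : E →L[ℝ] F) :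
    ∃ (Y : Type) (_ : NormedAddCommGroup Y) (_ : NormedSpace ℝ Y), CompleteSpace Y ∧
      ∃ (S : E →L[ℝ] Y) (J : Y →L[ℝ] F),
        Function.Surjective S ∧ Function.Injective J ∧
        (∀ e, J (S e) = T e) ∧
        (∀ y, ‖y‖ = sInf {r : ℝ | ∃ e, S e = y ∧ r = ‖e‖}) ∧
        (IsCompactOperator (⇑T) → IsCompactOperator (⇑J)) := by
  haveI hclosed : IsClosed ((LinearMap.ker (T : E →ₗ[ℝ] F) : Submodule ℝ E) : Set E) := ContinuousLinearMap.isClosed_ker T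
  set K := LinearMap.ker (T : E →ₗ[ℝ] F) with hK
  refine ⟨E ⧸ K, inferInstance, inferInstance, inferInstance, ?_⟩
  have hmk_norm : ∀ e : E, ‖K.mkQ e‖ ≤ 1 * ‖e‖ := fun e => by
    simpa using Submodule.Quotient.norm_mk_le K e
  let S : E →L[ℝ] E ⧸ K := LinearMap.mkContinuous K.mkQ 1 hmk_norm
  have hS : ∀ e : E, S e = Submodule.Quotient.mk e := fun e => rfl
  let Jlin : E ⧸ K →ₗ[ℝ] F := K.liftQ (T : E →ₗ[ℝ] F) le_rfl
  have hJlin : ∀ e : E, Jlin (Submodule.Quotient.mk e) = T e := fun e => rfl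
  have hJbound : ∀ y : E ⧸ K, ‖Jlin y‖ ≤ (‖T‖ + 1) * ‖y‖ := by
    intro y
    refine le_of_forall_pos_le_add fun δ hδ => ?_
    have hT1 : (0:ℝ) < ‖T‖ + 1 := by positivity
    have hε : (0:ℝ) < δ / (‖T‖ + 1) := by positivity
    obtain ⟨m, hm, hmlt⟩ := Submodule.Quotient.norm_mk_lt y hε
    have h1 : ‖Jlin y‖ = ‖T m‖ := by rw [← hm, hJlin]
    have h2 : ‖T m‖ ≤ ‖T‖ * ‖m‖ := T.le_opNorm m
    have h3 : ‖T‖ * ‖m‖ ≤ (‖T‖ + 1) * ‖m‖ := by nlinarith [norm_nonneg m]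
    have h4 : (‖T‖ + 1) * ‖m‖ ≤ (‖T‖ + 1) * (‖y‖ + δ / (‖T‖ + 1)) := by
      exact mul_le_mul_of_nonneg_left hmlt.le hT1.le
    have h5 : (‖T‖ + 1) * (‖y‖ + δ / (‖T‖ + 1)) = (‖T‖ + 1) * ‖y‖ + δ := by
      field_simp
    linarith
  let J : E ⧸ K →L[ℝ] F := LinearMap.mkContinuous Jlin (‖T‖ + 1) hJbound
  have hJ : ∀ y, J y = Jlin y := fun y => rfl
  refine ⟨S, J, ?_, ?_, ?_, ?_, ?_⟩
  · intro y
    obtain ⟨e, he⟩ := Submodule.Quotient.mk_surjective K y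
    exact ⟨e, by rw [hS, he]⟩
  · intro y₁ y₂ h
    obtain ⟨e₁, rfl⟩ := Submodule.Quotient.mk_surjective K y₁
    obtain ⟨e₂, rfl⟩ := Submodule.Quotient.mk_surjective K y₂
    rw [hJ, hJ, hJlin, hJlin] at h
    rw [Submodule.Quotient.eq]
    simpa [hK, LinearMap.mem_ker, map_sub, sub_eq_zero] using h
  · intro e; rw [hS, hJ, hJlin]
  · intro y
    rw [show ‖y‖ = sInf (norm '' { m : E | (m : E ⧸ K.toAddSubgroup) = y }) from
      (by
        apply le_antisymm
        · refine le_csInf ?_ ?_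
          · obtain ⟨m, hm⟩ := QuotientAddGroup.mk_surjective y
            exact ⟨_, m, hm, rfl⟩
          · rintro _ ⟨m, hm, rfl⟩
            rw [← hm]
            exact QuotientAddGroup.norm_mk_le_norm
        · refine not_lt.mp fun hlt => ?_
          obtain ⟨m, hm, hlt'⟩ := QuotientAddGroup.norm_lt_iff.mp hlt
          have hbdd : BddBelow (norm '' { m : E | (m : E ⧸ K.toAddSubgroup) = y }) :=
            ⟨0, by rintro _ ⟨_, _, rfl⟩; exact norm_nonneg _⟩
          exact absurd (csInf_le hbdd ⟨m, hm, rfl⟩) (not_le.mpr hlt'))]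
    congr 1
    ext r
    constructor
    · rintro ⟨e, he, rfl⟩
      exact ⟨e, he, rfl⟩
    · rintro ⟨e, he, rfl⟩
      exact ⟨e, he, rfl⟩
  · rintro ⟨C, hC, hCmem⟩
    refine ⟨C, hC, ?_⟩
    obtain ⟨ε, hε, hball⟩ := Metric.mem_nhds_iff.mp hCmem
    refine Metric.mem_nhds_iff.mpr ⟨ε, hε, ?_⟩
    intro y hy
    rw [Metric.mem_ball, dist_zero_right] at hy
    obtain ⟨m, hm, hmlt⟩ := Submodule.Quotient.norm_mk_lt y (show (0:ℝ) < ε - ‖y‖ by linarith)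
    have hmball : m ∈ Metric.ball (0:E) ε := by
      rw [Metric.mem_ball, dist_zero_right]; linarith
    have : T m ∈ C := hball hmball
    have hJy : J y = T m := by rw [← hm, hJ, hJlin]
    simpa [Set.mem_preimage, hJy] using this

/-- Factorization of an operator that is bounded from `E₀` to `F₀` and compact from
`E₁` to `F₁` through its images `Y i` equipped with the quotient (range) norms: the
`Y i` are Banach spaces, `S i : E i → Y i` is bounded and surjective, the inclusion
`J i : Y i → F i` is injective with `T = J ∘ S`, the `Y i`-norm is the infimum norm over
preimages, and `J₁ : Y₁ → F₁` is compact. -/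
theorem stmt15 {E₀ E₁ F₀ F₁ : Type}
    [NormedAddCommGroup E₀] [NormedSpace ℝ E₀] [CompleteSpace E₀]
    [NormedAddCommGroup E₁] [NormedSpace ℝ E₁] [CompleteSpace E₁]
    [NormedAddCommGroup F₀] [NormedSpace ℝ F₀] [CompleteSpace F₀]
    [NormedAddCommGroup F₁] [NormedSpace ℝ F₁] [CompleteSpace F₁]
    (T₀ : E₀ →L[ℝ] F₀) (T₁ : E₁ →L[ℝ] F₁) (hT₁ : IsCompactOperator (⇑T₁)) :
    ∃ (Y₀ Y₁ : Type) (_ : NormedAddCommGroup Y₀) (_ : NormedSpace ℝ Y₀)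
      (_ : NormedAddCommGroup Y₁) (_ : NormedSpace ℝ Y₁),
      CompleteSpace Y₀ ∧ CompleteSpace Y₁ ∧
      ∃ (S₀ : E₀ →L[ℝ] Y₀) (S₁ : E₁ →L[ℝ] Y₁) (J₀ : Y₀ →L[ℝ] F₀) (J₁ : Y₁ →L[ℝ] F₁),
        Function.Surjective S₀ ∧ Function.Surjective S₁ ∧
        Function.Injective J₀ ∧ Function.Injective J₁ ∧
        (∀ e : E₀, J₀ (S₀ e) = T₀ e) ∧ (∀ e : E₁, J₁ (S₁ e) = T₁ e) ∧
        (∀ y : Y₀, ‖y‖ = sInf {r : ℝ | ∃ e : E₀, S₀ e = y ∧ r = ‖e‖}) ∧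
        (∀ y : Y₁, ‖y‖ = sInf {r : ℝ | ∃ e : E₁, S₁ e = y ∧ r = ‖e‖}) ∧
        IsCompactOperator (⇑J₁) := by
  obtain ⟨Y₀, i₀, i₀', c₀, S₀, J₀, hS₀, hJ₀, hfac₀, hnorm₀, _⟩ := factor_aux T₀
  obtain ⟨Y₁, i₁, i₁', c₁, S₁, J₁, hS₁, hJ₁, hfac₁, hnorm₁, hcpt⟩ := factor_aux T₁
  exact ⟨Y₀, Y₁, i₀, i₀', i₁, i₁', c₀, c₁, S₀, S₁, J₀, J₁, hS₀, hS₁, hJ₀, hJ₁,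
    hfac₀, hfac₁, hnorm₀, hnorm₁, hcpt hT₁⟩
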